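/- Let N ≥ 1, α > 0, T_w > 0, and let t ↦ P(t) be a family of N×N real row-stochastic matrices with P_{ij}(t) ≥ α for all i, j and all t ≥ 0, such that t ↦ P(t) is continuous. Let x : [0,∞) → ℝ^N be differentiable and satisfy ẋ(t) = −(I − P(t)) x(t) for all t ≥ 0. Then with ρ := 1 − e^{−2αT_w} ∈ (0,1), one has diam(x(t + T_w)) ≤ (1 − ρ) · diam(x(t)) for all t ≥ 0, where diam(x) := max_i x_i − min_i x_i. -/

import Mathlib

open Matrix BigOperators

/-- The diameter of a vector: `diam x = max_i x_i − min_i x_i`. -/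
noncomputable def vecDiam {N : ℕ} (x : Fin N → ℝ) : ℝ := (⨆ i, x i) - (⨅ i, x i)

private lemma sup'_pairs {N : ℕ} (hN : 0 < N) (y : Fin N → ℝ)
    (H : (Finset.univ : Finset (Fin N × Fin N)).Nonempty) :
    Finset.univ.sup' H (fun p : Fin N × Fin N => y p.1 - y p.2) = vecDiam y := by
  haveI : Nonempty (Fin N) := ⟨⟨0, hN⟩⟩
  have h1 : BddAbove (Set.range y) := (Set.finite_range y).bddAbove
  have h2 : BddBelow (Set.range y) := (Set.finite_range y).bddBelow
  apply le_antisymm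
  · exact Finset.sup'_le _ _ fun p _ => sub_le_sub (le_ciSup h1 p.1) (ciInf_le h2 p.2)
  · obtain ⟨i0, hi0⟩ := Finite.exists_max y
    obtain ⟨j0, hj0⟩ := Finite.exists_min y
    have e1 : (⨆ i, y i) = y i0 := le_antisymm (ciSup_le hi0) (le_ciSup h1 i0)
    have e2 : (⨅ i, y i) = y j0 := le_antisymm (ciInf_le h2 j0) (le_ciInf hj0)
    unfold vecDiam
    rw [e1, e2]
    exact Finset.le_sup' (fun p : Fin N × Fin N => y p.1 - y p.2) (Finset.mem_univ (i0, j0))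

private lemma continuousAt_finset_sup' {ι : Type*} (s : Finset ι) (hs : s.Nonempty)
    (g : ι → ℝ → ℝ) {a : ℝ} (h : ∀ i ∈ s, ContinuousAt (g i) a) :
    ContinuousAt (fun z => s.sup' hs fun i => g i z) a := by
  revert h
  induction hs using Finset.Nonempty.cons_induction with
  | singleton i =>
      intro h
      have hi := h i (Finset.mem_singleton_self i)
      simp only [Finset.sup'_singleton]
      exact hi
  | cons i s hi hne ih =>
      intro h
      simp only [Finset.sup'_cons hne]
      exact (h i (Finset.mem_cons_self i s)).max (ih fun j hj => h j (Finset.mem_cons_of_mem hj))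

private lemma dobrushin {N : ℕ} (hN2 : 2 ≤ N) {α : ℝ} (hα : 0 ≤ α)
    (Q : Matrix (Fin N) (Fin N) ℝ) (hrow : ∀ i, ∑ k, Q i k = 1)
    (hpos : ∀ i j, α ≤ Q i j) (y : Fin N → ℝ) (i j : Fin N) :
    ∑ k, (Q i k - Q j k) * y k ≤ (1 - 2*α) * vecDiam y := by
  haveI : Nonempty (Fin N) := ⟨⟨0, by omega⟩⟩
  have h1 : BddAbove (Set.range y) := (Set.finite_range y).bddAbove
  have h2 : BddBelow (Set.range y) := (Set.finite_range y).bddBelow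
  set M := ⨆ k, y k with hM
  set m := ⨅ k, y k with hm
  have hyM : ∀ k, y k ≤ M := fun k => le_ciSup h1 k
  have hmy : ∀ k, m ≤ y k := fun k => ciInf_le h2 k
  set c : Fin N → ℝ := fun k => min (Q i k) (Q j k) with hc
  have hA2 : 2*α ≤ ∑ k, c k := by
    have h2N : (2:ℝ) ≤ (N:ℝ) := by exact_mod_cast hN2
    calc 2*α ≤ ∑ _k : Fin N, α := by
          rw [Finset.sum_const, Finset.card_univ, Fintype.card_fin, nsmul_eq_mul]
          nlinarith
      _ ≤ ∑ k, c k := Finset.sum_le_sum fun k _ => le_min (hpos i k) (hpos j k)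
  have key : ∑ k, (Q i k - Q j k) * y k ≤ (1 - ∑ k, c k) * (M - m) := by
    have e : ∑ k, (Q i k - Q j k) * y k
        = ∑ k, (Q i k - c k) * y k - ∑ k, (Q j k - c k) * y k := by
      rw [← Finset.sum_sub_distrib]; exact Finset.sum_congr rfl fun k _ => by ring
    have b1 : ∑ k, (Q i k - c k) * y k ≤ ∑ k, (Q i k - c k) * M :=
      Finset.sum_le_sum fun k _ =>
        mul_le_mul_of_nonneg_left (hyM k) (sub_nonneg.2 (min_le_left _ _))
    have b2 : ∑ k, (Q j k - c k) * m ≤ ∑ k, (Q j k - c k) * y k :=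
      Finset.sum_le_sum fun k _ =>
        mul_le_mul_of_nonneg_left (hmy k) (sub_nonneg.2 (min_le_right _ _))
    have s1 : ∑ k, (Q i k - c k) * M = (1 - ∑ k, c k) * M := by
      rw [← Finset.sum_mul, Finset.sum_sub_distrib, hrow]
    have s2 : ∑ k, (Q j k - c k) * m = (1 - ∑ k, c k) * m := by
      rw [← Finset.sum_mul, Finset.sum_sub_distrib, hrow]
    rw [e]
    rw [s1] at b1
    rw [s2] at b2
    nlinarith [b1, b2]
  have hMm : 0 ≤ M - m :=
    sub_nonneg.2 ((hmy (Classical.arbitrary _)).trans (hyM (Classical.arbitrary _)))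
  have hvd : vecDiam y = M - m := rfl
  rw [hvd]
  nlinarith [key, hA2, hMm]

/-- **Window contraction for the time-varying consensus flow.**
Under uniform positivity `P_{ij}(t) ≥ α`, with `ρ := 1 − e^{−2αT_w} ∈ (0,1)`, any
solution of `ẋ = −(I − P(t)) x` satisfies
`diam(x(t + T_w)) ≤ (1 − ρ) diam(x(t))` for all `t ≥ 0`. -/
theorem timeVarying_consensus_window_contraction
    (N : ℕ) (hN : 1 ≤ N) (α : ℝ) (hα : 0 < α) (Tw : ℝ) (hTw : 0 < Tw)
    (P : ℝ → Matrix (Fin N) (Fin N) ℝ)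
    (hPcont : Continuous P)
    (hrow : ∀ t ≥ (0:ℝ), ∀ i, ∑ j, P t i j = 1)
    (hnonneg : ∀ t ≥ (0:ℝ), ∀ i j, 0 ≤ P t i j)
    (hpos : ∀ t ≥ (0:ℝ), ∀ i j, α ≤ P t i j)
    (x : ℝ → Fin N → ℝ)
    (hode : ∀ t ≥ (0:ℝ), HasDerivAt x ((P t).mulVec (x t) - x t) t) :
    (0 < 1 - Real.exp (-2 * α * Tw)) ∧ (1 - Real.exp (-2 * α * Tw) < 1) ∧
      ∀ t ≥ (0:ℝ),
        vecDiam (x (t + Tw)) ≤ (1 - (1 - Real.exp (-2 * α * Tw))) * vecDiam (x t) := by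
  have hexp1 : Real.exp (-2 * α * Tw) < 1 := by
    rw [← Real.exp_zero]
    apply Real.exp_lt_exp.2
    nlinarith
  refine ⟨sub_pos.2 hexp1, sub_lt_self _ (Real.exp_pos _), ?_⟩
  intro t ht
  have hco : (1 : ℝ) - (1 - Real.exp (-2 * α * Tw)) = Real.exp (-2 * α * Tw) := by ring
  rw [hco]
  rcases lt_or_ge N 2 with hN1 | hN2
  · have hN1' : N = 1 := by omega
    subst hN1'
    have hud : ∀ y : Fin 1 → ℝ, vecDiam y = 0 := fun y => by
      simp [vecDiam, ciSup_unique, ciInf_unique]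
    rw [hud, hud, mul_zero]
  · have hN0 : 0 < N := by omega
    haveI : Nonempty (Fin N) := ⟨⟨0, hN0⟩⟩
    have hne : (Finset.univ : Finset (Fin N × Fin N)).Nonempty := Finset.univ_nonempty
    set g : Fin N × Fin N → ℝ → ℝ := fun p s => x s p.1 - x s p.2 with hg
    set f : ℝ → ℝ := fun s => Finset.univ.sup' hne (fun p => g p s) with hf
    have hfeq : ∀ s, f s = vecDiam (x s) := fun s => sup'_pairs hN0 (x s) hne
    have hxc : ∀ (i : Fin N) (s : ℝ), 0 ≤ s → ContinuousAt (fun z => x z i) s :=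
      fun i s hs => ((hasDerivAt_pi.1 (hode s hs)) i).continuousAt
    have hgc : ∀ (p : Fin N × Fin N) (s : ℝ), 0 ≤ s → ContinuousAt (g p) s :=
      fun p s hs => (hxc p.1 s hs).sub (hxc p.2 s hs)
    have hfc : ∀ s : ℝ, 0 ≤ s → ContinuousAt f s := fun s hs =>
      continuousAt_finset_sup' _ hne _ (fun p _ => hgc p s hs)
    set d : Fin N × Fin N → ℝ → ℝ := fun p s =>
      (∑ k, (P s p.1 k - P s p.2 k) * x s k) - (x s p.1 - x s p.2) with hd
    have hgd : ∀ (p : Fin N × Fin N) (s : ℝ), 0 ≤ s → HasDerivAt (g p) (d p s) s := by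
      intro p s hs
      have h1 := (hasDerivAt_pi.1 (hode s hs)) p.1
      have h2 := (hasDerivAt_pi.1 (hode s hs)) p.2
      have h3 : HasDerivAt (g p) _ s := h1.sub h2
      convert h3 using 1
      have e : ∑ k, (P s p.1 k - P s p.2 k) * x s k
          = ∑ k, P s p.1 k * x s k - ∑ k, P s p.2 k * x s k := by
        rw [← Finset.sum_sub_distrib]; exact Finset.sum_congr rfl fun k _ => by ring
      simp only [hd, Pi.sub_apply, Matrix.mulVec, dotProduct, e]
      ring
    have key : ∀ s ∈ Set.Icc t (t + Tw), f s ≤ gronwallBound (f t) (-(2*α)) 0 (s - t) := by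
      refine le_gronwallBound_of_liminf_deriv_right_le
        (f' := fun s => -(2*α) * f s) ?_ ?_ le_rfl ?_
      · exact fun s hs => (hfc s (ht.trans hs.1)).continuousWithinAt
      · intro s hs r hr
        by_contra hcon
        simp only [Filter.not_frequently, not_lt] at hcon
        have hs0 : (0:ℝ) ≤ s := ht.trans hs.1
        have hz : ∀ᶠ z in nhdsWithin s (Set.Ioi s),
            ∃ p : Fin N × Fin N, g p z = f z ∧ r ≤ (z - s)⁻¹ * (f z - f s) := by
          filter_upwards [hcon] with z hzr
          obtain ⟨p, _, hp⟩ := Finset.exists_mem_eq_sup' hne (fun p => g p z)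
          exact ⟨p, hp.symm, hzr⟩
        have hex : ∃ p : Fin N × Fin N, ∃ᶠ z in nhdsWithin s (Set.Ioi s),
            g p z = f z ∧ r ≤ (z - s)⁻¹ * (f z - f s) := by
          by_contra hno
          simp only [not_exists, Filter.not_frequently] at hno
          obtain ⟨z, ⟨p, hp⟩, hnp⟩ := (hz.and (Filter.eventually_all.2 hno)).exists
          exact hnp p hp
        obtain ⟨p, hfreq⟩ := hex
        have hgps : g p s = f s := by
          have htend : Filter.Tendsto (fun z => g p z - f z) (nhdsWithin s (Set.Ioi s))
              (nhds (g p s - f s)) :=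
            (((hgc p s hs0).sub (hfc s hs0)).tendsto).mono_left nhdsWithin_le_nhds
          have hmem : (g p s - f s) ∈ closure ({0} : Set ℝ) :=
            mem_closure_of_frequently_of_tendsto
              (hfreq.mono fun z hzz => Set.mem_singleton_iff.2 (sub_eq_zero.2 hzz.1)) htend
          rw [closure_singleton, Set.mem_singleton_iff, sub_eq_zero] at hmem
          exact hmem
        have hslope : Filter.Tendsto (slope (g p) s) (nhdsWithin s (Set.Ioi s))
            (nhds (d p s)) :=
          (hasDerivAt_iff_tendsto_slope.1 (hgd p s hs0)).mono_left
            (nhdsWithin_mono s fun z hzz => Set.mem_compl_singleton_iff.2 hzz.ne')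
        have hrd : r ≤ d p s := by
          have hmem : d p s ∈ closure (Set.Ici r) := by
            apply mem_closure_of_frequently_of_tendsto _ hslope
            refine hfreq.mono fun z hzz => ?_
            have hsl : slope (g p) s z = (z - s)⁻¹ * (g p z - g p s) := by
              rw [slope_def_field]; ring
            rw [Set.mem_Ici, hsl, hgps, hzz.1]
            exact hzz.2
          rwa [isClosed_Ici.closure_eq, Set.mem_Ici] at hmem
        have hdob : ∑ k, (P s p.1 k - P s p.2 k) * x s k ≤ (1 - 2*α) * vecDiam (x s) :=
          dobrushin hN2 hα.le (P s) (hrow s hs0) (hpos s hs0) (x s) p.1 p.2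
        have hgf : x s p.1 - x s p.2 = f s := hgps
        have hdle : d p s ≤ -(2*α) * f s := by
          have : d p s = (∑ k, (P s p.1 k - P s p.2 k) * x s k) - (x s p.1 - x s p.2) := rfl
          rw [this, hgf, ← hfeq s] at *
          linarith [hdob]
        have hr' : -(2*α) * f s < r := hr
        linarith
      · intro s hs
        simp
    have hfin := key (t + Tw) ⟨le_add_of_nonneg_right hTw.le, le_rfl⟩
    rw [gronwallBound_ε0] at hfin
    have harg : -(2*α) * (t + Tw - t) = -2 * α * Tw := by ring
    rw [harg] at hfin
    rw [← hfeq t, ← hfeq (t + Tw), mul_comm]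
    exact hfin
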